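/- Fix γ > 0 and η ∈ (1/2, 1). Suppose q ∈ (1/2, 1) is a critical point of the binary pointwise focal risk W(q) = -η (1-q)^γ log q - (1-η) q^γ log(1-q), so that η = (q^γ/(1-q) - γ q^{γ-1} log(1-q)) / (q^γ/(1-q) - γ q^{γ-1} log(1-q) + (1-q)^γ/q - γ (1-q)^{γ-1} log q). Then q < η; that is, the focal-risk minimizer is strictly underconfident. -/

import Mathlib

open Real

set_option maxHeartbeats 2000000 in
theorem binary_focal_minimizer_underconfident (γ : ℝ) (hγ : 0 < γ)
    (η q : ℝ) (hη : η ∈ Set.Ioo (1/2 : ℝ) 1) (hq : q ∈ Set.Ioo (1/2 : ℝ) 1)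
    (hrecover : η =
      (q ^ γ / (1 - q) - γ * q ^ (γ - 1) * Real.log (1 - q)) /
        (q ^ γ / (1 - q) - γ * q ^ (γ - 1) * Real.log (1 - q)
          + (1 - q) ^ γ / q - γ * (1 - q) ^ (γ - 1) * Real.log q)) :
    q < η := by
  obtain ⟨hq1, hq2⟩ := hq
  have hq0 : (0:ℝ) < q := by linarith
  have hp0 : (0:ℝ) < 1 - q := by linarith
  subst hrecover
  rw [Real.rpow_sub hq0 γ 1, Real.rpow_sub hp0 γ 1]
  simp only [Real.rpow_one]
  set p : ℝ := 1 - q with hp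
  set a : ℝ := q ^ γ with ha
  set b : ℝ := p ^ γ with hb
  set lp : ℝ := Real.log p with hlp
  set lq : ℝ := Real.log q with hlq
  clear_value p a b lp lq
  have hpltq : p < q := by rw [hp]; linarith
  have hp1 : p < 1 := by rw [hp]; linarith
  have ha0 : 0 < a := by rw [ha]; exact Real.rpow_pos_of_pos hq0 γ
  have hb0 : 0 < b := by rw [hb]; exact Real.rpow_pos_of_pos hp0 γ
  have hba : b < a := by rw [ha, hb]; exact Real.rpow_lt_rpow hp0.le hpltq hγ
  have hlq0 : lq < 0 := by rw [hlq]; exact Real.log_neg hq0 hq2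
  have hlp0 : lp < 0 := by rw [hlp]; exact Real.log_neg hp0 hp1
  have hlplq : lp < lq := by rw [hlp, hlq]; exact Real.log_lt_log hp0 hpltq
  -- q * lq ≥ -p  (from log q ≥ 1 - 1/q)
  have hqlq : -p ≤ q * lq := by
    have h := Real.log_le_sub_one_of_pos (inv_pos.mpr hq0)
    rw [Real.log_inv] at h
    rw [← hlq] at h
    have h2 := mul_le_mul_of_nonneg_left h hq0.le
    have h3 : q * (q⁻¹ - 1) = 1 - q := by
      rw [mul_sub, mul_inv_cancel₀ hq0.ne', mul_one]
    rw [h3] at h2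
    have hp' : p = 1 - q := hp
    nlinarith [h2]
  -- q * (lq - lp) > q - p  (strict, from log (p/q) < p/q - 1)
  have hd : q - p < q * (lq - lp) := by
    have hne : p / q ≠ 1 := by
      intro hcon
      rw [div_eq_one_iff_eq hq0.ne'] at hcon
      linarith
    have h := Real.log_lt_sub_one_of_pos (div_pos hp0 hq0) hne
    rw [Real.log_div hp0.ne' hq0.ne'] at h
    rw [← hlp, ← hlq] at h
    have h2 := mul_lt_mul_of_pos_left h hq0
    have h3 : q * (p / q - 1) = p - q := by field_simp
    rw [h3] at h2
    nlinarith [h2]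
  -- t3 : 0 ≤ q*(a-b) + γ*(p*a - q*b), by Bernoulli-type bounds
  have t3 : 0 ≤ q * (a - b) + γ * (p * a - q * b) := by
    rcases le_total γ 1 with h1γ | h1γ
    · -- concave case: b/a = (p/q)^γ ≤ (1-γ) + γ*(p/q)
      have h := Real.geom_mean_le_arith_mean2_weighted (by linarith : (0:ℝ) ≤ 1 - γ)
        hγ.le (le_refl (0:ℝ) |>.trans zero_le_one) (div_pos hp0 hq0).le
        (by ring : (1 - γ) + γ = 1)
      rw [Real.one_rpow, one_mul, Real.div_rpow hp0.le hq0.le] at h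
      rw [← ha, ← hb] at h
      -- h : b / a ≤ (1-γ)*1 + γ*(p/q)
      rw [div_le_iff₀ ha0] at h
      have h2 := mul_le_mul_of_nonneg_left h hq0.le
      have h3 : q * (((1 - γ) * 1 + γ * (p / q)) * a) = (1 - γ) * q * a + γ * p * a := by
        field_simp
      rw [h3] at h2
      -- h2 : q * b ≤ (1-γ)*q*a + γ*p*a
      nlinarith [mul_nonneg hγ.le (mul_nonneg hq0.le (sub_nonneg.mpr hba.le))]
    · -- convex case: a/b = (q/p)^γ ≥ 1 + γ*(q-p)/p
      have hs : (-1:ℝ) ≤ (q - p) / p :=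
        le_trans (by norm_num) (div_nonneg (by linarith) hp0.le)
      have h := one_add_mul_self_le_rpow_one_add hs h1γ
      have h4 : 1 + (q - p) / p = q / p := by field_simp; ring
      rw [h4, Real.div_rpow hq0.le hp0.le] at h
      rw [← ha, ← hb] at h
      -- h : 1 + γ * ((q-p)/p) ≤ a / b
      rw [le_div_iff₀ hb0] at h
      have h2 := mul_le_mul_of_nonneg_left h hp0.le
      have h3 : p * ((1 + γ * ((q - p) / p)) * b) = p * b + γ * (q - p) * b := by
        field_simp
      rw [h3] at h2
      -- h2 : p*b + γ*(q-p)*b ≤ p*a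
      have hpt : 0 ≤ p * (q * (a - b) + γ * (p * a - q * b)) := by
        nlinarith [mul_le_mul_of_nonneg_left h2 hq0.le,
          mul_nonneg (mul_nonneg hγ.le hb0.le) (sq_nonneg (q - p)),
          mul_nonneg (mul_nonneg hγ.le (sq_nonneg p)) (sub_nonneg.mpr hba.le)]
      have h5 : q * (a - b) + γ * (p * a - q * b)
          = p * (q * (a - b) + γ * (p * a - q * b)) / p := by
        field_simp
      rw [h5]
      exact div_nonneg hpt hp0.le
  -- KEY inequality
  have key : b * p * q - γ * (q ^ 2 * b) * lq < a * p * q - γ * (p ^ 2 * a) * lp := by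
    rcases le_total γ 2 with h2γ | h2γ
    · -- γ ≤ 2 : q^2 * b ≥ p^2 * a
      have hX : p ^ 2 * a ≤ q ^ 2 * b := by
        have h := Real.rpow_le_rpow_of_exponent_ge (div_pos hp0 hq0)
          (le_of_lt ((div_lt_one hq0).mpr hpltq)) h2γ
        rw [Real.rpow_two, Real.div_rpow hp0.le hq0.le, ← ha, ← hb, div_pow,
          div_le_div_iff₀ (pow_pos hq0 2) ha0] at h
        -- h : p^2 * a ≤ b * q^2
        linarith [h]
      have t1 : γ * (p ^ 2 * a) * (q - p) < γ * (p ^ 2 * a) * (q * (lq - lp)) :=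
        mul_lt_mul_of_pos_left hd (mul_pos hγ (mul_pos (pow_pos hp0 2) ha0))
      have t2 : γ * ((-p) * (q ^ 2 * b - p ^ 2 * a)) ≤ γ * ((q * lq) * (q ^ 2 * b - p ^ 2 * a)) :=
        mul_le_mul_of_nonneg_left
          (mul_le_mul_of_nonneg_right hqlq (sub_nonneg.mpr hX)) hγ.le
      have goal_q : q * (b * p * q - γ * (q ^ 2 * b) * lq)
          < q * (a * p * q - γ * (p ^ 2 * a) * lp) := by
        nlinarith [t1, t2, mul_nonneg (mul_nonneg hp0.le hq0.le) t3]
      exact lt_of_mul_lt_mul_left goal_q hq0.le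
    · -- 2 ≤ γ : q^2 * b ≤ p^2 * a, everything termwise
      have hX : q ^ 2 * b ≤ p ^ 2 * a := by
        have h := Real.rpow_le_rpow_of_exponent_ge (div_pos hp0 hq0)
          (le_of_lt ((div_lt_one hq0).mpr hpltq)) h2γ
        rw [Real.rpow_two, Real.div_rpow hp0.le hq0.le, ← ha, ← hb, div_pow,
          div_le_div_iff₀ ha0 (pow_pos hq0 2)] at h
        -- h : b * q^2 ≤ p^2 * a
        linarith [h]
      have m1 : γ * (q ^ 2 * b) * (-lq) ≤ γ * (p ^ 2 * a) * (-lq) := by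
        apply mul_le_mul_of_nonneg_right _ (by linarith)
        nlinarith [hX]
      have m2 : γ * (p ^ 2 * a) * (-lq) ≤ γ * (p ^ 2 * a) * (-lp) := by
        exact mul_le_mul_of_nonneg_left (by linarith)
          (mul_nonneg hγ.le (mul_nonneg (pow_pos hp0 2).le ha0.le))
      nlinarith [m1, m2, mul_pos (mul_pos hp0 hq0) (sub_pos.mpr hba)]
  -- now conclude
  have hAe : 0 < a / p - γ * (a / q) * lp := by
    nlinarith [div_pos ha0 hp0,
      mul_pos (mul_pos hγ (div_pos ha0 hq0)) (neg_pos.mpr hlp0)]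
  have hBe : 0 < b / q - γ * (b / p) * lq := by
    nlinarith [div_pos hb0 hq0,
      mul_pos (mul_pos hγ (div_pos hb0 hp0)) (neg_pos.mpr hlq0)]
  rw [lt_div_iff₀ (by linarith)]
  have hpq0 : 0 < p * q := mul_pos hp0 hq0
  have e1 : q * (b / q - γ * (b / p) * lq)
      = (b * p * q - γ * (q ^ 2 * b) * lq) / (p * q) := by
    field_simp
  have e2 : p * (a / p - γ * (a / q) * lp)
      = (a * p * q - γ * (p ^ 2 * a) * lp) / (p * q) := by
    field_simp
  have key2 : q * (b / q - γ * (b / p) * lq) < p * (a / p - γ * (a / q) * lp) := by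
    rw [e1, e2]
    exact (div_lt_div_iff₀ hpq0 hpq0).mpr (mul_lt_mul_of_pos_right key hpq0)
  have hqpAe : q * (a / p - γ * (a / q) * lp) + p * (a / p - γ * (a / q) * lp)
      = a / p - γ * (a / q) * lp := by
    rw [hp]; ring
  linarith [key2, hqpAe]
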